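/- Assume the pure peakon assumption. Then for every 1 ≤ k ≤ n, the function z ↦ (C_n(z)/A_n(z))·s_{11}(−z) − (1/2)·(B_n(z)/A_n(z))·s_{21}(−z) + s_{31}(−z) is O(1/z^k) as z → +∞ (big-O with respect to the filter at +∞ on the reals). -/

import Mathlib

open Matrix Real

/-- The 3×3 matrix `S(x,m;z) = I − z·m·v(x)·w(x)ᵀ` with
`v(x) = (e^{−x}, −2, e^{x})ᵀ` and `w(x) = (e^{x}, 1, e^{−x})ᵀ`. -/
noncomputable def Speak (x m z : ℝ) : Matrix (Fin 3) (Fin 3) ℝ :=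
  1 - (z * m) • vecMulVec ![Real.exp (-x), -2, Real.exp x] ![Real.exp x, 1, Real.exp (-x)]

/-- `S_{[n,k]}(z) = S_n(z) · S_{n−1}(z) ⋯ S_{n−k+1}(z)`, where `S_j(z) = S(x_j, m_j; z)`. -/
noncomputable def Sblock (x m : ℕ → ℝ) (n k : ℕ) (z : ℝ) : Matrix (Fin 3) (Fin 3) ℝ :=
  ((List.range k).map (fun i => Speak (x (n - i)) (m (n - i)) z)).prod

/-- The vector `(A_j(z), B_j(z), C_j(z))ᵀ = S_j(z) · S_{j−1}(z) ⋯ S_1(z) · (1,0,0)ᵀ`. -/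
noncomputable def ABCvec (x m : ℕ → ℝ) (j : ℕ) (z : ℝ) : Fin 3 → ℝ :=
  (((List.range j).map (fun i => Speak (x (j - i)) (m (j - i)) z)).prod).mulVec ![1, 0, 0]

def Jmat : Matrix (Fin 3) (Fin 3) ℝ := !![0,0,1;0,-2,0;1,0,0]
noncomputable def Kmat : Matrix (Fin 3) (Fin 3) ℝ := !![0,0,1;0,-(1/2),0;1,0,0]

lemma speak_eq (x m z : ℝ) : Speak x m z =
    !![1 - z*m*exp (-x)*exp x, -(z*m*exp (-x)), -(z*m*exp (-x)*exp (-x));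
       2*z*m*exp x, 1+2*z*m, 2*z*m*exp (-x);
       -(z*m*exp x*exp x), -(z*m*exp x), 1 - z*m*exp x*exp (-x)] := by
  have h : (1 : Matrix (Fin 3) (Fin 3) ℝ) = !![1,0,0;0,1,0;0,0,1] := Matrix.one_fin_three
  rw [Speak, h]
  ext i j
  fin_cases i <;> fin_cases j <;>
    simp [vecMulVec, Matrix.vecHead, Matrix.vecTail] <;> ring

lemma speak_inv (x m z : ℝ) : Speak x m z * Speak x m (-z) = 1 := by
  have h0 := Real.exp_ne_zero x
  rw [speak_eq, speak_eq, Matrix.one_fin_three]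
  ext i j
  fin_cases i <;> fin_cases j <;>
    (simp [Matrix.mul_apply, Fin.sum_univ_succ, Real.exp_neg, Matrix.vecHead, Matrix.vecTail];
     (try field_simp); (try ring))

lemma speak_transpose (x m z : ℝ) : (Speak x m z)ᵀ =
    !![1 - z*m*exp (-x)*exp x, 2*z*m*exp x, -(z*m*exp x*exp x);
       -(z*m*exp (-x)), 1+2*z*m, -(z*m*exp x);
       -(z*m*exp (-x)*exp (-x)), 2*z*m*exp (-x), 1 - z*m*exp x*exp (-x)] := by
  rw [speak_eq]
  ext i j
  fin_cases i <;> fin_cases j <;> simp [Matrix.vecHead, Matrix.vecTail]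

lemma speak_sym (x m z : ℝ) : Jmat * (Speak x m z)ᵀ = Speak x m z * Jmat := by
  rw [speak_transpose, speak_eq, Jmat]
  ext i j
  fin_cases i <;> fin_cases j <;>
    (simp [Matrix.mul_apply, Fin.sum_univ_succ, Matrix.vecHead, Matrix.vecTail]; try ring)

lemma JK : Jmat * Kmat = 1 := by
  rw [Jmat, Kmat, Matrix.mul_fin_three, Matrix.one_fin_three]; norm_num

lemma KJ : Kmat * Jmat = 1 := by
  rw [Jmat, Kmat, Matrix.mul_fin_three, Matrix.one_fin_three]; norm_num

/-- decreasing product S_j S_{j-1} ⋯ S_1 -/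
noncomputable def Pprod (x m : ℕ → ℝ) (j : ℕ) (z : ℝ) : Matrix (Fin 3) (Fin 3) ℝ :=
  ((List.range j).map (fun i => Speak (x (j - i)) (m (j - i)) z)).prod

/-- increasing product S_1 S_2 ⋯ S_j -/
noncomputable def Qprod (x m : ℕ → ℝ) (j : ℕ) (z : ℝ) : Matrix (Fin 3) (Fin 3) ℝ :=
  ((List.range j).map (fun i => Speak (x (i + 1)) (m (i + 1)) z)).prod

lemma Pprod_succ (x m : ℕ → ℝ) (j : ℕ) (z : ℝ) :
    Pprod x m (j + 1) z = Speak (x (j + 1)) (m (j + 1)) z * Pprod x m j z := by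
  rw [Pprod, Pprod, List.range_succ_eq_map, List.map_cons, List.prod_cons]
  congr 1
  simp [List.map_map, Function.comp_def, Nat.succ_sub_succ]

lemma Qprod_succ (x m : ℕ → ℝ) (j : ℕ) (z : ℝ) :
    Qprod x m (j + 1) z = Qprod x m j z * Speak (x (j + 1)) (m (j + 1)) z := by
  rw [Qprod, Qprod, List.range_succ, List.map_append, List.prod_append]
  simp

lemma Sblock_succ (x m : ℕ → ℝ) (n k : ℕ) (z : ℝ) :
    Sblock x m n (k + 1) z = Sblock x m n k z * Speak (x (n - k)) (m (n - k)) z := by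
  rw [Sblock, Sblock, List.range_succ, List.map_append, List.prod_append]
  simp

lemma JP (x m : ℕ → ℝ) (j : ℕ) (z : ℝ) :
    Jmat * (Pprod x m j z)ᵀ = Qprod x m j z * Jmat := by
  induction j with
  | zero => simp [Pprod, Qprod]
  | succ j ih =>
    rw [Pprod_succ, Qprod_succ, Matrix.transpose_mul, ← Matrix.mul_assoc, ih,
      Matrix.mul_assoc, speak_sym, Matrix.mul_assoc]

lemma PK (x m : ℕ → ℝ) (j : ℕ) (z : ℝ) :
    (Pprod x m j z)ᵀ * Kmat = Kmat * Qprod x m j z := by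
  have h := JP x m j z
  have : (Pprod x m j z)ᵀ = Kmat * (Qprod x m j z * Jmat) := by
    rw [← h, ← Matrix.mul_assoc, KJ, Matrix.one_mul]
  rw [this, Matrix.mul_assoc, Matrix.mul_assoc, JK, Matrix.mul_one]

lemma telescope (x m : ℕ → ℝ) (n : ℕ) (z : ℝ) :
    ∀ k, k ≤ n → Qprod x m n z * Sblock x m n k (-z) = Qprod x m (n - k) z := by
  intro k
  induction k with
  | zero => intro _; simp [Sblock]
  | succ k ih =>
    intro hk
    have hk' : k ≤ n := Nat.le_of_succ_le hk
    have hlt : k < n := hk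
    rw [Sblock_succ, ← Matrix.mul_assoc, ih hk']
    have h1 : n - k = (n - (k + 1)) + 1 := by omega
    rw [h1, Qprod_succ, Matrix.mul_assoc]
    have h2 : n - (k + 1) + 1 = n - k := by omega
    rw [h2, speak_inv, Matrix.mul_one]

lemma ABC_eq (x m : ℕ → ℝ) (n : ℕ) (z : ℝ) (i : Fin 3) :
    ABCvec x m n z i = Pprod x m n z i 0 := by
  simp [ABCvec, Pprod, Matrix.mulVec, dotProduct, Fin.sum_univ_succ]

lemma numer_id (x m : ℕ → ℝ) (n k : ℕ) (hk : k ≤ n) (z : ℝ) :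
    ABCvec x m n z 2 * Sblock x m n k (-z) 0 0
      - (1 / 2) * ABCvec x m n z 1 * Sblock x m n k (-z) 1 0
      + ABCvec x m n z 0 * Sblock x m n k (-z) 2 0
    = Qprod x m (n - k) z 2 0 := by
  have h : (Pprod x m n z)ᵀ * Kmat * Sblock x m n k (-z) = Kmat * Qprod x m (n - k) z := by
    rw [PK, Matrix.mul_assoc, telescope x m n z k hk]
  have h00 := congrArg (fun M : Matrix (Fin 3) (Fin 3) ℝ => M 0 0) h
  simp only [Matrix.mul_apply, Fin.sum_univ_succ, Finset.sum_empty, Fin.sum_univ_zero,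
    Matrix.transpose_apply, Kmat] at h00
  rw [ABC_eq, ABC_eq, ABC_eq]
  simp [Matrix.vecHead, Matrix.vecTail] at h00
  linarith [h00]

lemma speak_entry_bound (x m : ℝ) : ∃ D : ℝ, 0 ≤ D ∧
    ∀ z : ℝ, 1 ≤ z → ∀ i l : Fin 3, |Speak x m z i l| ≤ D * z := by
  set s : ℝ := exp (-x) + 2 + exp x with hs
  have hspos : 0 < s := by positivity
  refine ⟨1 + |m| * s * s, by positivity, ?_⟩
  intro z hz i l
  have hz0 : 0 < z := lt_of_lt_of_le one_pos hz
  have hv : ∀ i : Fin 3, |(![exp (-x), -2, exp x] : Fin 3 → ℝ) i| ≤ s := by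
    intro i; fin_cases i <;> simp [hs, abs_le] <;>
      nlinarith [Real.exp_pos (-x), Real.exp_pos x]
  have hw : ∀ l : Fin 3, |(![exp x, 1, exp (-x)] : Fin 3 → ℝ) l| ≤ s := by
    intro l; fin_cases l <;> simp [hs, abs_le] <;>
      nlinarith [Real.exp_pos (-x), Real.exp_pos x]
  have hone : |(1 : Matrix (Fin 3) (Fin 3) ℝ) i l| ≤ 1 := by
    rw [Matrix.one_apply]; split <;> simp
  have : Speak x m z i l = (1 : Matrix (Fin 3) (Fin 3) ℝ) i l
      - z * m * ((![exp (-x), -2, exp x] : Fin 3 → ℝ) i * (![exp x, 1, exp (-x)] : Fin 3 → ℝ) l) := by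
    simp [Speak, vecMulVec]; try ring
  rw [this]
  have h1 : |(1 : Matrix (Fin 3) (Fin 3) ℝ) i l
      - z * m * ((![exp (-x), -2, exp x] : Fin 3 → ℝ) i * (![exp x, 1, exp (-x)] : Fin 3 → ℝ) l)|
      ≤ 1 + z * |m| * (s * s) := by
    refine le_trans (abs_sub _ _) (add_le_add hone ?_)
    rw [abs_mul, abs_mul, abs_mul, abs_of_pos hz0]
    have h0l : 0 ≤ |(![exp x, 1, exp (-x)] : Fin 3 → ℝ) l| := abs_nonneg _
    have hvw : |(![exp (-x), -2, exp x] : Fin 3 → ℝ) i| * |(![exp x, 1, exp (-x)] : Fin 3 → ℝ) l|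
        ≤ s * s := mul_le_mul (hv i) (hw l) h0l hspos.le
    exact mul_le_mul_of_nonneg_left hvw (by positivity)
  refine le_trans h1 ?_
  nlinarith [abs_nonneg m]

lemma Qprod_bound (x m : ℕ → ℝ) (j : ℕ) : ∃ C : ℝ, 0 ≤ C ∧
    ∀ z : ℝ, 1 ≤ z → ∀ i l : Fin 3, |Qprod x m j z i l| ≤ C * z ^ j := by
  induction j with
  | zero =>
    refine ⟨1, zero_le_one, ?_⟩
    intro z hz i l
    simp only [Qprod, List.range_zero, List.map_nil, List.prod_nil, pow_zero, mul_one]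
    rw [Matrix.one_apply]; split <;> simp
  | succ j ih =>
    obtain ⟨C, hC, hCb⟩ := ih
    obtain ⟨D, hD, hDb⟩ := speak_entry_bound (x (j + 1)) (m (j + 1))
    refine ⟨3 * C * D, by positivity, ?_⟩
    intro z hz i l
    have hz0 : 0 < z := lt_of_lt_of_le one_pos hz
    rw [Qprod_succ]
    have hexp : Qprod x m (j+1+0) z i l = 0 ∨ True := Or.inr trivial
    have hmul : (Qprod x m j z * Speak (x (j+1)) (m (j+1)) z) i l
        = ∑ t : Fin 3, Qprod x m j z i t * Speak (x (j+1)) (m (j+1)) z t l :=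
      Matrix.mul_apply
    rw [hmul]
    refine le_trans (Finset.abs_sum_le_sum_abs _ _) ?_
    have hterm : ∀ t : Fin 3, |Qprod x m j z i t * Speak (x (j+1)) (m (j+1)) z t l|
        ≤ C * z ^ j * (D * z) := by
      intro t
      rw [abs_mul]
      have h1 := hCb z hz i t
      have h2 := hDb z hz t l
      have := abs_nonneg (Qprod x m j z i t)
      have := abs_nonneg (Speak (x (j+1)) (m (j+1)) z t l)
      nlinarith
    refine le_trans (Finset.sum_le_sum (fun t _ => hterm t)) ?_
    simp only [Finset.sum_const, Finset.card_univ, Fintype.card_fin, nsmul_eq_mul]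
    ring_nf
    nlinarith [pow_pos hz0 j]

lemma ABC_zero (x m : ℕ → ℝ) (z : ℝ) : ABCvec x m 0 z = ![1, 0, 0] := by
  funext i
  simp [ABCvec]

lemma ABC_succ (x m : ℕ → ℝ) (j : ℕ) (z : ℝ) (i : Fin 3) :
    ABCvec x m (j + 1) z i = ABCvec x m j z i
      - z * m (j + 1) * (![exp (-(x (j+1))), -2, exp (x (j+1))] i)
        * (exp (x (j+1)) * ABCvec x m j z 0 + ABCvec x m j z 1
            + exp (-(x (j+1))) * ABCvec x m j z 2) := by
  have h : ABCvec x m (j + 1) z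
      = (Speak (x (j+1)) (m (j+1)) z).mulVec (ABCvec x m j z) := by
    show (Pprod x m (j+1) z).mulVec ![1,0,0] = _
    rw [Pprod_succ, ← Matrix.mulVec_mulVec]
    rfl
  rw [h]
  fin_cases i <;>
    simp [speak_eq, Matrix.mulVec, dotProduct, Fin.sum_univ_succ,
      Matrix.vecHead, Matrix.vecTail] <;> ring

lemma tendsto_aff (a c : ℝ) :
    Filter.Tendsto (fun z : ℝ => (a - z * c) / z) Filter.atTop (nhds (-c)) := by
  have hT : Filter.Tendsto (fun z : ℝ => a * z⁻¹ - c) Filter.atTop (nhds (-c)) := by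
    have := (tendsto_inv_atTop_zero.const_mul a).sub_const c
    simpa using this
  refine hT.congr' ?_
  filter_upwards [Filter.eventually_gt_atTop 0] with z hz
  field_simp

lemma gap_pos {d : ℝ} (hd : 0 < d) : 0 < exp d - 2 + exp (-d) := by
  have ha : 1 < exp d := by
    rw [show (1:ℝ) = exp 0 by simp]
    exact Real.exp_lt_exp.2 hd
  have hb : exp (-d) < 1 := by
    rw [show (1:ℝ) = exp 0 by simp]
    exact Real.exp_lt_exp.2 (by linarith)
  have hprod : exp d * exp (-d) = 1 := by rw [← Real.exp_add]; simp
  have hkey : (exp d - 1) * (exp (-d) - 1) < 0 :=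
    mul_neg_of_pos_of_neg (by linarith) (by linarith)
  nlinarith

lemma ABC_tendsto (x m : ℕ → ℝ) (n : ℕ) (hm : ∀ i, 1 ≤ i → i ≤ n → 0 < m i)
    (hx : ∀ i, 1 ≤ i → i < n → x i < x (i + 1)) :
    ∀ j, 1 ≤ j → j ≤ n → ∃ lam : ℝ, lam ≠ 0 ∧ ∀ i : Fin 3,
      Filter.Tendsto (fun z => ABCvec x m j z i / z ^ j) Filter.atTop
        (nhds (lam * ![exp (-(x j)), -2, exp (x j)] i)) := by
  intro j
  induction j with
  | zero => intro h; omega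
  | succ j ih =>
    intro _ hjn
    by_cases hj : j = 0
    · -- base case j + 1 = 1
      subst hj
      have hm1 : 0 < m 1 := hm 1 le_rfl hjn
      have hpos : 0 < m 1 * exp (x 1) := by positivity
      refine ⟨-(m 1 * exp (x 1)), neg_ne_zero.2 (ne_of_gt hpos), ?_⟩
      intro i
      have heq : ∀ z : ℝ, ABCvec x m 1 z i / z ^ 1
          = ((![1,0,0] : Fin 3 → ℝ) i
              - z * (m 1 * ![exp (-(x 1)), -2, exp (x 1)] i * exp (x 1))) / z := by
        intro z
        rw [pow_one, ABC_succ]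
        simp only [ABC_zero]
        norm_num
        congr 1
        simp; ring
      have T := (tendsto_aff ((![1,0,0] : Fin 3 → ℝ) i)
        (m 1 * ![exp (-(x 1)), -2, exp (x 1)] i * exp (x 1))).congr
        (fun z => (heq z).symm)
      convert T using 2
      ring
    · -- inductive step
      have hj1 : 1 ≤ j := Nat.one_le_iff_ne_zero.2 hj
      have hjn' : j ≤ n := by omega
      obtain ⟨lam, hlam, hten⟩ := ih hj1 hjn'
      have hmj : 0 < m (j + 1) := hm (j + 1) (by omega) hjn
      have hxj : x j < x (j + 1) := hx j hj1 (by omega)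
      set g : ℝ := exp (x (j+1) - x j) - 2 + exp (x j - x (j+1)) with hg
      have hgpos : 0 < g := by
        have := gap_pos (d := x (j+1) - x j) (by linarith)
        rw [hg]
        have : -(x (j+1) - x j) = x j - x (j+1) := by ring
        rw [← this]
        exact gap_pos (by linarith)
      set lam' : ℝ := -(m (j+1) * (lam * g)) with hlam'
      have hlam'0 : lam' ≠ 0 := by
        rw [hlam']
        intro h
        rcases mul_eq_zero.1 (neg_eq_zero.1 h) with h1 | h2
        · exact absurd h1 (ne_of_gt hmj)
        · rcases mul_eq_zero.1 h2 with h3 | h4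
          · exact hlam h3
          · exact absurd h4 (ne_of_gt hgpos)
      refine ⟨lam', hlam'0, ?_⟩
      intro i
      -- limits of components
      have t0 : Filter.Tendsto (fun z => ABCvec x m j z 0 / z ^ j) Filter.atTop
          (nhds (lam * exp (-(x j)))) := by simpa using hten 0
      have t1 : Filter.Tendsto (fun z => ABCvec x m j z 1 / z ^ j) Filter.atTop
          (nhds (lam * (-2))) := by simpa using hten 1
      have t2 : Filter.Tendsto (fun z => ABCvec x m j z 2 / z ^ j) Filter.atTop
          (nhds (lam * exp (x j))) := by simpa using hten 2
      set Glim : ℝ := exp (x (j+1)) * (lam * exp (-(x j))) + lam * (-2)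
          + exp (-(x (j+1))) * (lam * exp (x j)) with hGlim
      have hG : Filter.Tendsto (fun z => exp (x (j+1)) * (ABCvec x m j z 0 / z ^ j)
          + ABCvec x m j z 1 / z ^ j
          + exp (-(x (j+1))) * (ABCvec x m j z 2 / z ^ j)) Filter.atTop (nhds Glim) :=
        ((t0.const_mul _).add t1).add (t2.const_mul _)
      have hF0 : Filter.Tendsto (fun z => (ABCvec x m j z i / z ^ j) * z⁻¹)
          Filter.atTop (nhds 0) := by
        have := (hten i).mul tendsto_inv_atTop_zero
        simpa using this
      have hF : Filter.Tendsto (fun z => (ABCvec x m j z i / z ^ j) * z⁻¹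
          - (m (j+1) * ![exp (-(x (j+1))), -2, exp (x (j+1))] i)
            * (exp (x (j+1)) * (ABCvec x m j z 0 / z ^ j)
              + ABCvec x m j z 1 / z ^ j
              + exp (-(x (j+1))) * (ABCvec x m j z 2 / z ^ j)))
          Filter.atTop (nhds (0 - (m (j+1) * ![exp (-(x (j+1))), -2, exp (x (j+1))] i) * Glim)) :=
        hF0.sub (hG.const_mul _)
      have heq : ∀ᶠ z in Filter.atTop, (ABCvec x m j z i / z ^ j) * z⁻¹
          - (m (j+1) * ![exp (-(x (j+1))), -2, exp (x (j+1))] i)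
            * (exp (x (j+1)) * (ABCvec x m j z 0 / z ^ j)
              + ABCvec x m j z 1 / z ^ j
              + exp (-(x (j+1))) * (ABCvec x m j z 2 / z ^ j))
          = ABCvec x m (j+1) z i / z ^ (j+1) := by
        filter_upwards [Filter.eventually_gt_atTop 0] with z hz
        have hzj : z ^ j ≠ 0 := pow_ne_zero _ (ne_of_gt hz)
        rw [ABC_succ]
        field_simp
        ring
      have hfinal := hF.congr' heq
      have hGval : Glim = lam * g := by
        rw [hGlim, hg, show x (j+1) - x j = x (j+1) + -(x j) by ring,
          show x j - x (j+1) = -(x (j+1)) + x j by ring, Real.exp_add, Real.exp_add]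
        ring
      convert hfinal using 2
      rw [hGval, hlam']
      ring

theorem weyl_approx_combined (n : ℕ) (hn : 1 ≤ n) (x m : ℕ → ℝ)
    (hm : ∀ i, 1 ≤ i → i ≤ n → 0 < m i)
    (hx : ∀ i, 1 ≤ i → i < n → x i < x (i + 1))
    (k : ℕ) (hk1 : 1 ≤ k) (hkn : k ≤ n) :
    (fun z : ℝ => (ABCvec x m n z 2 / ABCvec x m n z 0) * Sblock x m n k (-z) 0 0
        - (1 / 2) * (ABCvec x m n z 1 / ABCvec x m n z 0) * Sblock x m n k (-z) 1 0
        + Sblock x m n k (-z) 2 0)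
      =O[Filter.atTop] (fun z : ℝ => 1 / z ^ k) := by
  obtain ⟨C, hC, hCb⟩ := Qprod_bound x m (n - k)
  obtain ⟨lam, hlam, hten⟩ := ABC_tendsto x m n hm hx n hn le_rfl
  set a : ℝ := lam * exp (-(x n)) with ha_def
  have ha : a ≠ 0 := mul_ne_zero hlam (Real.exp_ne_zero _)
  have hapos : 0 < |a| := abs_pos.2 ha
  have hA : Filter.Tendsto (fun z => ABCvec x m n z 0 / z ^ n) Filter.atTop (nhds a) := by
    simpa using hten 0
  have habs : Filter.Tendsto (fun z => |ABCvec x m n z 0 / z ^ n|) Filter.atTop (nhds (|a|)) :=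
    hA.abs
  have hev : ∀ᶠ z in Filter.atTop, |a| / 2 < |ABCvec x m n z 0 / z ^ n| :=
    habs.eventually (eventually_gt_nhds (by linarith))
  rw [Asymptotics.isBigO_iff]
  refine ⟨2 * C / |a|, ?_⟩
  filter_upwards [hev, Filter.eventually_ge_atTop 1] with z hzA hz1
  have hz0 : 0 < z := lt_of_lt_of_le one_pos hz1
  have hzn : 0 < z ^ n := pow_pos hz0 n
  have hzk : 0 < z ^ k := pow_pos hz0 k
  have hznk : 0 < z ^ (n - k) := pow_pos hz0 (n - k)
  have hAbound : |a| / 2 * z ^ n ≤ |ABCvec x m n z 0| := by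
    rw [abs_div, abs_of_pos hzn] at hzA
    rw [lt_div_iff₀ hzn] at hzA
    linarith
  have hApos : 0 < |ABCvec x m n z 0| := lt_of_lt_of_le (by positivity) hAbound
  have hAne : ABCvec x m n z 0 ≠ 0 := fun h => by simp [h] at hApos
  have hfun : ABCvec x m n z 2 / ABCvec x m n z 0 * Sblock x m n k (-z) 0 0
        - 1 / 2 * (ABCvec x m n z 1 / ABCvec x m n z 0) * Sblock x m n k (-z) 1 0
        + Sblock x m n k (-z) 2 0
      = (ABCvec x m n z 2 * Sblock x m n k (-z) 0 0
          - 1 / 2 * ABCvec x m n z 1 * Sblock x m n k (-z) 1 0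
          + ABCvec x m n z 0 * Sblock x m n k (-z) 2 0) / ABCvec x m n z 0 := by
    field_simp
  rw [hfun, numer_id x m n k hkn z]
  rw [Real.norm_eq_abs, Real.norm_eq_abs, abs_div]
  have hQ := hCb z hz1 2 0
  have h1 : |Qprod x m (n - k) z 2 0| / |ABCvec x m n z 0|
      ≤ (C * z ^ (n - k)) / (|a| / 2 * z ^ n) :=
    div_le_div₀ (by positivity) hQ (by positivity) hAbound
  have hpow : z ^ n = z ^ (n - k) * z ^ k := by
    rw [← pow_add]
    congr 1
    omega
  have h2 : (C * z ^ (n - k)) / (|a| / 2 * z ^ n) = 2 * C / |a| * |1 / z ^ k| := by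
    rw [abs_of_pos (by positivity : (0:ℝ) < 1 / z ^ k), hpow]
    field_simp
  calc |Qprod x m (n - k) z 2 0| / |ABCvec x m n z 0|
      ≤ (C * z ^ (n - k)) / (|a| / 2 * z ^ n) := h1
    _ = 2 * C / |a| * |1 / z ^ k| := h2
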